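/- arXiv:2001.11933 — 3 statements merged into one kernel-verified Lean document; each statement's English description precedes it below -/
import Mathlib

section
/- For all p, q ∈ ℝ³ one has the identity g(p,q)² (p⁰ + q⁰)² − 4|p × q|² = s(p,q) |p − q|². -/
noncomputable section

/-- Euclidean inner product on ℝ³. -/
def dot3 (p q : Fin 3 → ℝ) : ℝ := ∑ i, p i * q i

/-- The relativistic energy `p⁰ = √(m²c² + |p|²)`. -/
noncomputable def pZero (m c : ℝ) (p : Fin 3 → ℝ) : ℝ :=
  Real.sqrt (m ^ 2 * c ^ 2 + dot3 p p)

lemma dot3_nonneg (p : Fin 3 → ℝ) : 0 ≤ dot3 p p :=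
  Finset.sum_nonneg fun i _ => mul_self_nonneg (p i)

lemma pZero_sq (m c : ℝ) (p : Fin 3 → ℝ) :
    pZero m c p ^ 2 = m ^ 2 * c ^ 2 + dot3 p p := by
  rw [pZero, Real.sq_sqrt]
  exact add_nonneg (by positivity) (dot3_nonneg p)

lemma cross_dot (p q : Fin 3 → ℝ) :
    dot3 (crossProduct p q) (crossProduct p q)
      = dot3 p p * dot3 q q - dot3 p q ^ 2 := by
  simp [crossProduct, dot3, Fin.sum_univ_three]
  ring

lemma sub_dot (p q : Fin 3 → ℝ) :
    dot3 (p - q) (p - q) = dot3 p p - 2 * dot3 p q + dot3 q q := by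
  simp [dot3, Fin.sum_univ_three]
  ring

/-- For all `p, q ∈ ℝ³`:
`g(p,q)² (p⁰ + q⁰)² − 4|p × q|² = s(p,q) |p − q|²`, where
`s = 2(p⁰q⁰ − p·q + m²c²)` and `g² = 2(p⁰q⁰ − p·q − m²c²)`. -/
theorem stmt0 (m c : ℝ) (hm : 0 < m) (hc : 0 < c) (p q : Fin 3 → ℝ) :
    (2 * (pZero m c p * pZero m c q - dot3 p q - m ^ 2 * c ^ 2)) *
        (pZero m c p + pZero m c q) ^ 2
      - 4 * dot3 (crossProduct p q) (crossProduct p q)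
    = (2 * (pZero m c p * pZero m c q - dot3 p q + m ^ 2 * c ^ 2)) *
        dot3 (p - q) (p - q) := by
  have ha := pZero_sq m c p
  have hb := pZero_sq m c q
  have hab : (pZero m c p * pZero m c q) ^ 2
      = (m ^ 2 * c ^ 2 + dot3 p p) * (m ^ 2 * c ^ 2 + dot3 q q) := by
    rw [mul_pow, ha, hb]
  rw [cross_dot, sub_dot]
  set a := pZero m c p
  set b := pZero m c q
  linear_combination (2 * (a * b - dot3 p q - m ^ 2 * c ^ 2)) * ha
    + (2 * (a * b - dot3 p q - m ^ 2 * c ^ 2)) * hb + 4 * hab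
end
end

section
/- For all p, q ∈ ℝ³ one has m c |p − q| ≤ g(p,q) √(p⁰ q⁰) and g(p,q) ≤ |p − q|; equivalently, m²c² |p − q|² ≤ g(p,q)² p⁰ q⁰ and g(p,q)² ≤ |p − q|². -/
set_option maxHeartbeats 1000000

noncomputable section

/-- The relativistic momentum `g(p,q) = √(2(p⁰q⁰ − p·q − m²c²))`. -/
noncomputable def gRel (m c : ℝ) (p q : Fin 3 → ℝ) : ℝ :=
  Real.sqrt (2 * (pZero m c p * pZero m c q - dot3 p q - m ^ 2 * c ^ 2))

/-- For all `p, q ∈ ℝ³`: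
`mc|p − q| ≤ g(p,q)√(p⁰q⁰)` and `g(p,q) ≤ |p − q|`; equivalently,
`m²c²|p − q|² ≤ g(p,q)² p⁰q⁰` and `g(p,q)² ≤ |p − q|²`. -/
theorem stmt5 (m c : ℝ) (hm : 0 < m) (hc : 0 < c) (p q : Fin 3 → ℝ) :
    m * c * Real.sqrt (dot3 (p - q) (p - q))
        ≤ gRel m c p q * Real.sqrt (pZero m c p * pZero m c q)
      ∧ gRel m c p q ≤ Real.sqrt (dot3 (p - q) (p - q))
      ∧ m ^ 2 * c ^ 2 * dot3 (p - q) (p - q)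
          ≤ (gRel m c p q) ^ 2 * (pZero m c p * pZero m c q)
      ∧ (gRel m c p q) ^ 2 ≤ dot3 (p - q) (p - q) := by
  set M := m ^ 2 * c ^ 2 with hM
  have hMpos : 0 < M := by positivity
  set P := dot3 p p with hP
  set Q := dot3 q q with hQ
  set s := dot3 p q with hs
  have hPnn : 0 ≤ P := Finset.sum_nonneg fun i _ => mul_self_nonneg _
  have hQnn : 0 ≤ Q := Finset.sum_nonneg fun i _ => mul_self_nonneg _
  -- Cauchy-Schwarz: s^2 ≤ P * Q
  have hCS : s ^ 2 ≤ P * Q := by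
    have h := Finset.sum_mul_sq_le_sq_mul_sq Finset.univ p q
    simp only [hP, hQ, hs, dot3]
    simpa [sq] using h
  have hsPQ : s ≤ Real.sqrt (P * Q) := by
    calc s ≤ |s| := le_abs_self s
      _ = Real.sqrt (s ^ 2) := (Real.sqrt_sq_eq_abs s).symm
      _ ≤ Real.sqrt (P * Q) := Real.sqrt_le_sqrt hCS
  have hr : Real.sqrt (P * Q) ^ 2 = P * Q := Real.sq_sqrt (by positivity)
  have hrnn : 0 ≤ Real.sqrt (P * Q) := Real.sqrt_nonneg _
  have h2r : Real.sqrt (P * Q) ≤ (P + Q) / 2 := by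
    have h : P * Q ≤ ((P + Q) / 2) ^ 2 := by nlinarith [sq_nonneg (P - Q)]
    calc Real.sqrt (P * Q) ≤ Real.sqrt (((P + Q) / 2) ^ 2) := Real.sqrt_le_sqrt h
      _ = (P + Q) / 2 := Real.sqrt_sq (by positivity)
  -- expand dot3 (p - q) (p - q)
  have hD : dot3 (p - q) (p - q) = P + Q - 2 * s := by
    simp only [hP, hQ, hs, dot3, Pi.sub_apply, Fin.sum_univ_three]
    ring
  have hDnn : 0 ≤ dot3 (p - q) (p - q) := by rw [hD]; linarith
  set a := pZero m c p with ha
  set b := pZero m c q with hb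
  have ha2 : a ^ 2 = M + P := Real.sq_sqrt (by linarith)
  have hb2 : b ^ 2 = M + Q := Real.sq_sqrt (by linarith)
  have hann : 0 ≤ a := Real.sqrt_nonneg _
  have hbnn : 0 ≤ b := Real.sqrt_nonneg _
  have ht2 : (a * b) ^ 2 = (M + P) * (M + Q) := by rw [mul_pow, ha2, hb2]
  -- ab ≥ M + √(PQ)
  have hab : M + Real.sqrt (P * Q) ≤ a * b := by
    have h1 : a * b = Real.sqrt ((M + P) * (M + Q)) := by
      rw [ha, hb, pZero, pZero, ← Real.sqrt_mul (by linarith)]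
    have h2 : (M + Real.sqrt (P * Q)) ^ 2 ≤ (M + P) * (M + Q) := by
      nlinarith [hr, hrnn, h2r, hMpos]
    calc M + Real.sqrt (P * Q) = Real.sqrt ((M + Real.sqrt (P * Q)) ^ 2) := by
          rw [Real.sqrt_sq (by positivity)]
      _ ≤ Real.sqrt ((M + P) * (M + Q)) := Real.sqrt_le_sqrt h2
      _ = a * b := h1.symm
  have hu : 0 ≤ a * b - M := by linarith
  -- inner expression of g is nonneg
  have hginn : 0 ≤ 2 * (a * b - s - M) := by linarith
  have hg2 : gRel m c p q ^ 2 = 2 * (a * b - s - M) := by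
    rw [gRel]; exact Real.sq_sqrt hginn
  have hgnn : 0 ≤ gRel m c p q := Real.sqrt_nonneg _
  -- squared inequality 1: M * D ≤ g^2 * (a*b)
  have key1 : M * dot3 (p - q) (p - q) ≤ gRel m c p q ^ 2 * (a * b) := by
    rw [hD, hg2]
    nlinarith [ht2, sq_nonneg (a * b - M - Real.sqrt (P * Q)), hr,
      mul_nonneg hu (sub_nonneg.mpr hsPQ), hMpos.le]
  -- squared inequality 2: g^2 ≤ D
  have key2 : gRel m c p q ^ 2 ≤ dot3 (p - q) (p - q) := by
    rw [hD, hg2]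
    nlinarith [sq_nonneg (a - b)]
  refine ⟨?_, ?_, key1, key2⟩
  · -- m c √D ≤ g √(ab)
    have h1 : (m * c * Real.sqrt (dot3 (p - q) (p - q))) ^ 2
        ≤ (gRel m c p q * Real.sqrt (a * b)) ^ 2 := by
      rw [mul_pow, mul_pow, mul_pow, Real.sq_sqrt hDnn,
        Real.sq_sqrt (mul_nonneg hann hbnn)]
      calc m ^ 2 * c ^ 2 * dot3 (p - q) (p - q)
          = M * dot3 (p - q) (p - q) := by rw [hM]
        _ ≤ gRel m c p q ^ 2 * (a * b) := key1
    have h0 : 0 ≤ m * c * Real.sqrt (dot3 (p - q) (p - q)) := by positivity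
    have h2 : 0 ≤ gRel m c p q * Real.sqrt (a * b) := by positivity
    have h3 := Real.sqrt_le_sqrt h1
    rwa [Real.sqrt_sq h0, Real.sqrt_sq h2] at h3
  · -- g ≤ √D
    have h := Real.sqrt_le_sqrt key2
    rwa [Real.sqrt_sq hgnn] at h
end
end

section
/- There exist constants T̄ > 0 and C > 0, depending only on m, c and K, such that for all τ with |τ − t| ≤ T̄, all p ∈ ℝ³ and all i, j ∈ {1,2,3}, the momentum derivatives of the spatial characteristic satisfy |∂_{p_i} X_j(τ; t, x, p)| ≤ C c |t − τ| / p⁰. -/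
noncomputable section

namespace Stmt16Aux

abbrev E3 := Fin 3 → ℝ

def nu3 (m c : ℝ) (u : E3) : ℝ := Real.sqrt (m ^ 2 * c ^ 2 + dot3 u u)

lemma dot3_self_nonneg (u : E3) : 0 ≤ dot3 u u :=
  Finset.sum_nonneg fun _ _ => mul_self_nonneg _

lemma sq_le_dot3 (u : E3) (i : Fin 3) : u i * u i ≤ dot3 u u :=
  Finset.single_le_sum (fun j _ => mul_self_nonneg (u j)) (Finset.mem_univ i)

lemma arg_nonneg (m c : ℝ) (u : E3) (hm : 0 < m) (hc : 0 < c) :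
    0 < m ^ 2 * c ^ 2 + dot3 u u := by
  have := dot3_self_nonneg u
  positivity

lemma mc_le_nu3 (m c : ℝ) (u : E3) (hm : 0 < m) (hc : 0 < c) :
    m * c ≤ nu3 m c u := by
  rw [nu3]
  calc m * c = Real.sqrt ((m * c) ^ 2) := (Real.sqrt_sq (by positivity)).symm
    _ ≤ _ := Real.sqrt_le_sqrt (by nlinarith [dot3_self_nonneg u])

lemma nu3_pos (m c : ℝ) (u : E3) (hm : 0 < m) (hc : 0 < c) : 0 < nu3 m c u :=
  lt_of_lt_of_le (by positivity) (mc_le_nu3 m c u hm hc)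

lemma abs_le_nu3 (m c : ℝ) (u : E3) (hm : 0 < m) (hc : 0 < c) (i : Fin 3) :
    |u i| ≤ nu3 m c u := by
  have h1 : |u i| = Real.sqrt (u i * u i) := by
    rw [← Real.sqrt_mul_self (abs_nonneg (u i)), abs_mul_abs_self]
  rw [h1, nu3]
  apply Real.sqrt_le_sqrt
  have := sq_le_dot3 u i
  nlinarith

lemma norm_le_nu3 (m c : ℝ) (u : E3) (hm : 0 < m) (hc : 0 < c) :
    ‖u‖ ≤ nu3 m c u := by
  apply pi_norm_le_iff_of_nonneg (nu3_pos m c u hm hc).le |>.2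
  intro i
  rw [Real.norm_eq_abs]
  exact abs_le_nu3 m c u hm hc i

lemma abs_dot3_le (m c : ℝ) (u h : E3) (hm : 0 < m) (hc : 0 < c) :
    |dot3 u h| ≤ 3 * nu3 m c u * ‖h‖ := by
  have h1 : |dot3 u h| ≤ ∑ i : Fin 3, |u i| * |h i| := by
    rw [dot3]
    refine (Finset.abs_sum_le_sum_abs _ _).trans ?_
    apply Finset.sum_le_sum
    intro i _
    rw [abs_mul]
  refine h1.trans ?_
  have h2 : ∀ i : Fin 3, |u i| * |h i| ≤ nu3 m c u * ‖h‖ := by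
    intro i
    apply mul_le_mul (abs_le_nu3 m c u hm hc i) ?_ (abs_nonneg _) (nu3_pos m c u hm hc).le
    rw [← Real.norm_eq_abs]
    exact norm_le_pi_norm h i
  calc (∑ i : Fin 3, |u i| * |h i|) ≤ ∑ _i : Fin 3, nu3 m c u * ‖h‖ :=
        Finset.sum_le_sum fun i _ => h2 i
    _ = 3 * nu3 m c u * ‖h‖ := by simp; ring

/-- The continuous linear map `h ↦ dot3 u h`. -/
def dotCLM (u : E3) : E3 →L[ℝ] ℝ := ∑ i, u i • (ContinuousLinearMap.proj i)

lemma dotCLM_apply (u h : E3) : dotCLM u h = dot3 u h := by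
  simp [dotCLM, dot3, ContinuousLinearMap.sum_apply]

lemma hasFDerivAt_dot_self (u : E3) :
    HasFDerivAt (fun q : E3 => dot3 q q) ((2 : ℝ) • dotCLM u) u := by
  have h : ∀ i : Fin 3, HasFDerivAt (fun q : E3 => q i * q i)
      (u i • (ContinuousLinearMap.proj i : E3 →L[ℝ] ℝ)
        + u i • (ContinuousLinearMap.proj i : E3 →L[ℝ] ℝ)) u := by
    intro i
    have hp : HasFDerivAt (fun q : E3 => q i)
        (ContinuousLinearMap.proj i : E3 →L[ℝ] ℝ) u :=
      (ContinuousLinearMap.proj i : E3 →L[ℝ] ℝ).hasFDerivAt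
    simpa using hp.fun_mul hp
  have hsum := HasFDerivAt.fun_sum (fun i (_ : i ∈ Finset.univ) => h i)
  have heq : (fun q : E3 => dot3 q q) = fun q : E3 => ∑ i : Fin 3, q i * q i := by
    funext q; rfl
  rw [heq]
  refine hsum.congr_fderiv ?_
  ext h
  simp [dotCLM, two_smul, ContinuousLinearMap.sum_apply, Finset.sum_add_distrib]

lemma hasFDerivAt_nu3 (m c : ℝ) (hm : 0 < m) (hc : 0 < c) (u : E3) :
    HasFDerivAt (nu3 m c) ((nu3 m c u)⁻¹ • dotCLM u) u := by
  have harg : HasFDerivAt (fun q : E3 => m ^ 2 * c ^ 2 + dot3 q q)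
      ((2 : ℝ) • dotCLM u) u := (hasFDerivAt_dot_self u).const_add _
  have hsqrt : HasDerivAt Real.sqrt (1 / (2 * nu3 m c u)) (m ^ 2 * c ^ 2 + dot3 u u) := by
    have := Real.hasDerivAt_sqrt (x := m ^ 2 * c ^ 2 + dot3 u u) (arg_nonneg m c u hm hc).ne'
    simpa [nu3] using this
  have := hsqrt.comp_hasFDerivAt u harg
  refine this.congr_fderiv ?_
  ext h
  have hpos := nu3_pos m c u hm hc
  simp [ContinuousLinearMap.smul_apply]
  field_simp

open Matrix in
lemma cross_norm_le (a b : E3) : ‖(crossProduct a) b‖ ≤ 2 * ‖a‖ * ‖b‖ := by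
  have hab : ∀ i j : Fin 3, |a i| * |b j| ≤ ‖a‖ * ‖b‖ := by
    intro i j
    apply mul_le_mul ?_ ?_ (abs_nonneg _) (norm_nonneg _)
    · rw [← Real.norm_eq_abs]; exact norm_le_pi_norm a i
    · rw [← Real.norm_eq_abs]; exact norm_le_pi_norm b j
  have key : ∀ i j k l : Fin 3, |a i * b j - a k * b l| ≤ 2 * ‖a‖ * ‖b‖ := by
    intro i j k l
    have h0 := abs_sub (a i * b j) (a k * b l)
    rw [abs_mul, abs_mul] at h0
    have h1 := hab i j
    have h2 := hab k l
    linarith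
  apply pi_norm_le_iff_of_nonneg (by positivity) |>.2
  intro k
  rw [Real.norm_eq_abs, cross_apply]
  fin_cases k <;> simpa using key _ _ _ _

/-- cross product as a continuous bilinear map -/
def crossCLM : E3 →L[ℝ] E3 →L[ℝ] E3 :=
  LinearMap.mkContinuous₂ crossProduct 2 cross_norm_le

lemma crossCLM_apply (a b : E3) : crossCLM a b = (crossProduct a) b := rfl

def WCLM (m c a : ℝ) (u : E3) : E3 →L[ℝ] E3 :=
  (a / nu3 m c u) • ContinuousLinearMap.id ℝ E3
    + ((-a / (nu3 m c u) ^ 3) • dotCLM u).smulRight u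

lemma hasFDerivAt_Wmap (m c a : ℝ) (hm : 0 < m) (hc : 0 < c) (u : E3) :
    HasFDerivAt (fun q : E3 => (a / nu3 m c q) • q) (WCLM m c a u) u := by
  have hν := nu3_pos m c u hm hc
  have hinv : HasFDerivAt (fun q : E3 => (nu3 m c q)⁻¹)
      ((-(nu3 m c u ^ 2)⁻¹) • ((nu3 m c u)⁻¹ • dotCLM u)) u :=
    (hasDerivAt_inv hν.ne').comp_hasFDerivAt u (hasFDerivAt_nu3 m c hm hc u)
  have hs : HasFDerivAt (fun q : E3 => a / nu3 m c q)
      ((-a / (nu3 m c u) ^ 3) • dotCLM u) u := by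
    have h2 := hinv.const_mul a
    have hfun : (fun q : E3 => a * (nu3 m c q)⁻¹) = fun q : E3 => a / nu3 m c q := by
      funext q; rw [div_eq_mul_inv]
    rw [hfun] at h2
    have hsc : a • -(nu3 m c u ^ 2)⁻¹ • (nu3 m c u)⁻¹ • dotCLM u
        = (-a / (nu3 m c u) ^ 3) • dotCLM u := by
      have heq : a * -(nu3 m c u ^ 2)⁻¹ * (nu3 m c u)⁻¹ = -a / (nu3 m c u) ^ 3 := by
        rw [div_eq_mul_inv, show (nu3 m c u) ^ 3 = nu3 m c u ^ 2 * nu3 m c u by ring,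
          mul_inv]
        ring
      rw [smul_smul, smul_smul, heq]
    rw [hsc] at h2
    exact h2
  have hid : HasFDerivAt (fun q : E3 => q) (ContinuousLinearMap.id ℝ E3) u :=
    hasFDerivAt_id u
  exact hs.smul hid

lemma WCLM_apply (m c a : ℝ) (u h : E3) :
    WCLM m c a u h = (a / nu3 m c u) • h + ((-a / (nu3 m c u) ^ 3) * dot3 u h) • u := by
  simp [WCLM, ContinuousLinearMap.smul_apply, ContinuousLinearMap.smulRight_apply,
    dotCLM_apply]

lemma WCLM_bound (m c a : ℝ) (hm : 0 < m) (hc : 0 < c) (u h : E3) :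
    ‖WCLM m c a u h‖ ≤ 4 * |a| / nu3 m c u * ‖h‖ := by
  have hν := nu3_pos m c u hm hc
  rw [WCLM_apply]
  refine (norm_add_le _ _).trans ?_
  rw [norm_smul, norm_smul]
  have e1 : ‖a / nu3 m c u‖ * ‖h‖ ≤ |a| / nu3 m c u * ‖h‖ := by
    rw [Real.norm_eq_abs, abs_div, abs_of_pos hν]
  have e2 : ‖-a / nu3 m c u ^ 3 * dot3 u h‖ * ‖u‖ ≤ 3 * |a| / nu3 m c u * ‖h‖ := by
    rw [Real.norm_eq_abs, abs_mul, abs_div, abs_neg, abs_of_pos (pow_pos hν 3)]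
    have b1 : |a| / nu3 m c u ^ 3 * |dot3 u h| * ‖u‖
        ≤ |a| / nu3 m c u ^ 3 * (3 * nu3 m c u * ‖h‖) * nu3 m c u := by
      apply mul_le_mul
      · exact mul_le_mul_of_nonneg_left (abs_dot3_le m c u h hm hc)
          (div_nonneg (abs_nonneg a) (pow_pos hν 3).le)
      · exact norm_le_nu3 m c u hm hc
      · exact norm_nonneg u
      · apply mul_nonneg (div_nonneg (abs_nonneg a) (pow_pos hν 3).le)
        have := norm_nonneg h
        nlinarith
    refine b1.trans (le_of_eq ?_)
    field_simp
  calc _ ≤ |a| / nu3 m c u * ‖h‖ + 3 * |a| / nu3 m c u * ‖h‖ := add_le_add e1 e2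
    _ = 4 * |a| / nu3 m c u * ‖h‖ := by ring

lemma W2_norm_le (m c : ℝ) (hm : 0 < m) (hc : 0 < c) (u : E3) :
    ‖(nu3 m c u)⁻¹ • u‖ ≤ 1 := by
  rw [norm_smul, Real.norm_eq_abs, abs_inv, abs_of_pos (nu3_pos m c u hm hc)]
  rw [inv_mul_le_iff₀ (nu3_pos m c u hm hc), mul_one]
  exact norm_le_nu3 m c u hm hc

lemma nu3_lipschitz (m c : ℝ) (hm : 0 < m) (hc : 0 < c) (a b : E3) :
    |nu3 m c a - nu3 m c b| ≤ 3 * ‖a - b‖ := by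
  have hop : ∀ u : E3, ‖(nu3 m c u)⁻¹ • dotCLM u‖ ≤ 3 := by
    intro u
    apply ContinuousLinearMap.opNorm_le_bound _ (by norm_num)
    intro h
    rw [ContinuousLinearMap.smul_apply, norm_smul, Real.norm_eq_abs, abs_inv,
      abs_of_pos (nu3_pos m c u hm hc), Real.norm_eq_abs, dotCLM_apply]
    calc (nu3 m c u)⁻¹ * |dot3 u h| ≤ (nu3 m c u)⁻¹ * (3 * nu3 m c u * ‖h‖) :=
          mul_le_mul_of_nonneg_left (abs_dot3_le m c u h hm hc)
            (inv_nonneg.2 (nu3_pos m c u hm hc).le)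
      _ = 3 * ‖h‖ := by field_simp [(nu3_pos m c u hm hc).ne']
  have := Convex.norm_image_sub_le_of_norm_hasFDerivWithin_le
    (f := nu3 m c) (f' := fun u => (nu3 m c u)⁻¹ • dotCLM u) (C := 3) (s := Set.univ)
    (fun u _ => (hasFDerivAt_nu3 m c hm hc u).hasFDerivWithinAt)
    (fun u _ => hop u) convex_univ (Set.mem_univ b) (Set.mem_univ a)
  simpa [Real.norm_eq_abs] using this

/-- mixed partials swap for jointly C² maps -/
lemma hasDerivAt_fderiv_swap {G H : ℝ → E3 → E3}
    (hG : ContDiff ℝ 2 (fun z : ℝ × E3 => G z.1 z.2))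
    (hH : ∀ τ q, HasDerivAt (fun σ => G σ q) (H τ q) τ)
    (p v : E3) (τ : ℝ) :
    HasDerivAt (fun σ => fderiv ℝ (fun q => G σ q) p v) (fderiv ℝ (fun q => H τ q) p v) τ := by
  set g : ℝ × E3 → E3 := fun z => G z.1 z.2 with hgdef
  have hg : ContDiff ℝ 2 g := hG
  have hgd : Differentiable ℝ g := hg.differentiable (by norm_num)
  set D : ℝ × E3 → (ℝ × E3 →L[ℝ] E3) := fderiv ℝ g with hDdef
  have hD : ContDiff ℝ 1 D := hg.fderiv_right (le_refl 2)
  have hDd : Differentiable ℝ D := hD.differentiable one_ne_zero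
  set D2 : (ℝ × E3) →L[ℝ] (ℝ × E3 →L[ℝ] E3) := fderiv ℝ D (τ, p) with hD2def
  have hDp : HasFDerivAt D D2 (τ, p) := (hDd (τ, p)).hasFDerivAt
  have hcomp : ∀ σ q, HasFDerivAt (fun q' => G σ q')
      ((D (σ, q)).comp (ContinuousLinearMap.inr ℝ ℝ E3)) q := by
    intro σ q
    exact ((hgd (σ, q)).hasFDerivAt).comp q (hasFDerivAt_prodMk_right σ q)
  have ha : ∀ σ, fderiv ℝ (fun q => G σ q) p v = D (σ, p) (0, v) := by
    intro σ
    rw [(hcomp σ p).fderiv]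
    rfl
  have hσ : ∀ τ' q, HasDerivAt (fun σ => G σ q) (D (τ', q) (1, 0)) τ' := by
    intro τ' q
    have h1 : HasFDerivAt (fun σ : ℝ => (σ, q)) (ContinuousLinearMap.inl ℝ ℝ E3) τ' :=
      hasFDerivAt_prodMk_left τ' q
    have h2 := ((hgd (τ', q)).hasFDerivAt).comp τ' h1
    have h3 := h2.hasDerivAt
    simpa [Function.comp_def] using h3
  have hHeq : ∀ τ' q, H τ' q = D (τ', q) (1, 0) := fun τ' q => (hH τ' q).unique (hσ τ' q)
  have h2 : HasDerivAt (fun σ => D (σ, p)) (D2 (1, 0)) τ := by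
    have := (hDp.comp τ (hasFDerivAt_prodMk_left τ p)).hasDerivAt
    simpa [Function.comp_def] using this
  have h3 : HasDerivAt (fun σ => D (σ, p) (0, v)) (D2 (1, 0) (0, v)) τ := by
    have := h2.clm_apply (hasDerivAt_const τ ((0 : ℝ), v))
    simpa using this
  have hd : fderiv ℝ (fun q => H τ q) p v = D2 (0, v) (1, 0) := by
    have hfun : (fun q => H τ q) = fun q => (D (τ, q)) (1, 0) := funext (hHeq τ)
    rw [hfun]
    have h4 : HasFDerivAt (fun q => D (τ, q)) (D2.comp (ContinuousLinearMap.inr ℝ ℝ E3)) p :=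
      hDp.comp p (hasFDerivAt_prodMk_right τ p)
    have h5 := h4.clm_apply (hasFDerivAt_const ((1 : ℝ), (0 : E3)) p)
    rw [h5.fderiv]
    simp
  have hsymm : D2 (1, 0) (0, v) = D2 (0, v) (1, 0) :=
    second_derivative_symmetric (fun y => (hgd y).hasFDerivAt) hDp _ _
  have hfuneq : (fun σ => fderiv ℝ (fun q => G σ q) p v) = fun σ => D (σ, p) (0, v) :=
    funext ha
  rw [hfuneq, hd, ← hsymm]
  exact h3

/-- slices of a jointly C¹ map are differentiable -/
lemma slice_diff {f : ℝ → E3 → E3} (hf : ContDiff ℝ 1 (fun z : ℝ × E3 => f z.1 z.2))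
    (σ : ℝ) (q : E3) : DifferentiableAt ℝ (fun q' => f σ q') q := by
  have h1 : DifferentiableAt ℝ (fun z : ℝ × E3 => f z.1 z.2) (σ, q) :=
    (hf.differentiable one_ne_zero) (σ, q)
  have h2 : DifferentiableAt ℝ (fun q' : E3 => (σ, q')) q :=
    (differentiableAt_const σ).prodMk differentiableAt_id
  exact h1.comp q h2

lemma fderiv_component {f : E3 → E3} {y : E3} (hf : DifferentiableAt ℝ f y) (j : Fin 3) (w : E3) :
    fderiv ℝ (fun y' => f y' j) y w = fderiv ℝ f y w j := by
  have h : HasFDerivAt (fun y' => f y' j)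
      ((ContinuousLinearMap.proj j : E3 →L[ℝ] ℝ).comp (fderiv ℝ f y)) y :=
    (ContinuousLinearMap.proj j : E3 →L[ℝ] ℝ).hasFDerivAt.comp y hf.hasFDerivAt
  rw [h.fderiv]
  rfl

lemma pi_single_decomp (w : E3) : w = ∑ k : Fin 3, w k • (Pi.single k (1 : ℝ) : E3) := by
  funext i
  simp [Pi.single_apply, Finset.sum_apply]

lemma row_bound {K : ℝ} (T : E3 →L[ℝ] ℝ) (hT : ∀ k : Fin 3, |T (Pi.single k 1)| ≤ K) (w : E3) :
    |T w| ≤ 3 * K * ‖w‖ := by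
  conv_lhs => rw [pi_single_decomp w]
  rw [map_sum]
  refine (Finset.abs_sum_le_sum_abs _ _).trans ?_
  have hterm : ∀ k : Fin 3, |T (w k • (Pi.single k (1 : ℝ) : E3))| ≤ K * ‖w‖ := by
    intro k
    rw [map_smul, smul_eq_mul, abs_mul, mul_comm (K : ℝ) ‖w‖]
    apply mul_le_mul ?_ (hT k) (abs_nonneg _) (norm_nonneg _)
    rw [← Real.norm_eq_abs]; exact norm_le_pi_norm w k
  calc (∑ k : Fin 3, |T (w k • (Pi.single k (1 : ℝ) : E3))|) ≤ ∑ _k : Fin 3, K * ‖w‖ :=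
        Finset.sum_le_sum fun k _ => hterm k
    _ = 3 * K * ‖w‖ := by simp; ring

lemma matrix_bound {K : ℝ} (T : E3 →L[ℝ] E3)
    (hT : ∀ j k : Fin 3, |T (Pi.single k 1) j| ≤ K) (hK : 0 ≤ K) (w : E3) :
    ‖T w‖ ≤ 3 * K * ‖w‖ := by
  apply pi_norm_le_iff_of_nonneg (by positivity) |>.2
  intro j
  rw [Real.norm_eq_abs]
  have := row_bound ((ContinuousLinearMap.proj j : E3 →L[ℝ] ℝ).comp T)
    (fun k => by simpa using hT j k) w
  simpa using this

lemma gronwall_two_sided {F : Type*} [NormedAddCommGroup F] [NormedSpace ℝ F]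
    {f f' : ℝ → F} (hd : ∀ s, HasDerivAt f (f' s) s) {L : ℝ} (hL : 0 ≤ L)
    (hb : ∀ s, ‖f' s‖ ≤ L * ‖f s‖) (t τ : ℝ) :
    ‖f τ‖ ≤ ‖f t‖ * Real.exp (L * |τ - t|) := by
  have fwd : ∀ (g g' : ℝ → F), (∀ s, HasDerivAt g (g' s) s) →
      (∀ s, ‖g' s‖ ≤ L * ‖g s‖) → ∀ a b : ℝ, a ≤ b →
      ‖g b‖ ≤ ‖g a‖ * Real.exp (L * (b - a)) := by
    intro g g' hgd hgb a b hab
    have h := norm_le_gronwallBound_of_norm_deriv_right_le (f := g) (f' := g')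
      (δ := ‖g a‖) (K := L) (ε := 0) (a := a) (b := b)
      (fun s _ => (hgd s).continuousAt.continuousWithinAt)
      (fun s _ => (hgd s).hasDerivWithinAt)
      le_rfl
      (fun s _ => by simpa using hgb s)
      b (Set.right_mem_Icc.2 hab)
    rwa [gronwallBound_ε0] at h
  rcases le_total t τ with h | h
  · have := fwd f f' hd hb t τ h
    rwa [abs_of_nonneg (by linarith)]
  · set g : ℝ → F := fun σ => f (2 * t - σ) with hg
    have hgd : ∀ σ, HasDerivAt g ((-1 : ℝ) • f' (2 * t - σ)) σ := by
      intro σ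
      have hinner : HasDerivAt (fun σ' : ℝ => 2 * t - σ') (-1) σ :=
        (hasDerivAt_id σ).const_sub (2 * t)
      exact (hd (2 * t - σ)).scomp σ hinner
    have hgb : ∀ σ, ‖(-1 : ℝ) • f' (2 * t - σ)‖ ≤ L * ‖g σ‖ := by
      intro σ
      rw [norm_smul]
      simpa using hb (2 * t - σ)
    have hfwd := fwd g _ hgd hgb t (2 * t - τ) (by linarith)
    have hgt : g t = f t := by simp only [hg]; congr 1; ring
    have hgτ : g (2 * t - τ) = f τ := by simp only [hg]; ring_nf
    rw [hgt, hgτ] at hfwd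
    have habs : |τ - t| = (2 * t - τ) - t := by rw [abs_of_nonpos (by linarith)]; ring
    rwa [habs]

lemma uIcc_abs_le {t τ σ : ℝ} (h : σ ∈ Set.uIcc t τ) : |σ - t| ≤ |τ - t| := by
  rcases le_total t τ with hle | hle
  · rw [Set.uIcc_of_le hle] at h
    rw [abs_of_nonneg (by linarith [h.1]), abs_of_nonneg (by linarith)]
    linarith [h.2]
  · rw [Set.uIcc_of_ge hle] at h
    rw [abs_of_nonpos (by linarith [h.2]), abs_of_nonpos (by linarith)]
    linarith [h.1]

end Stmt16Aux

open Stmt16Aux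

/-- There exist `T̄, C > 0` depending only on `m, c, K` such that, for any `C¹`
electromagnetic fields bounded (together with their spatial gradients) by `K`,
and any `C²` solution `(X, P)` of the relativistic characteristic system with
data `X(t;t,x,p) = x`, `P(t;t,x,p) = p`, the momentum derivatives of the spatial
characteristic satisfy `|∂_{p_i} X_j(τ;t,x,p)| ≤ C c |t − τ| / p⁰` for `|τ − t| ≤ T̄`. -/
theorem stmt16 (m c K : ℝ) (hm : 0 < m) (hc : 0 < c) (hK : 0 < K) :
    ∃ Tbar C : ℝ, 0 < Tbar ∧ 0 < C ∧
      ∀ (E B : ℝ → (Fin 3 → ℝ) → Fin 3 → ℝ),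
        ContDiff ℝ 1 (fun z : ℝ × (Fin 3 → ℝ) => E z.1 z.2) →
        ContDiff ℝ 1 (fun z : ℝ × (Fin 3 → ℝ) => B z.1 z.2) →
        (∀ s y i, |E s y i| ≤ K) →
        (∀ s y i, |B s y i| ≤ K) →
        (∀ s y i j, |fderiv ℝ (fun y' => E s y' i) y (Pi.single j 1)| ≤ K) →
        (∀ s y i j, |fderiv ℝ (fun y' => B s y' i) y (Pi.single j 1)| ≤ K) →
        ∀ (t : ℝ), 0 ≤ t → ∀ (x : Fin 3 → ℝ),
        ∀ (X P : ℝ → (Fin 3 → ℝ) → Fin 3 → ℝ),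
          ContDiff ℝ 2 (fun z : ℝ × (Fin 3 → ℝ) => X z.1 z.2) →
          ContDiff ℝ 2 (fun z : ℝ × (Fin 3 → ℝ) => P z.1 z.2) →
          (∀ p, X t p = x) → (∀ p, P t p = p) →
          (∀ τ p, HasDerivAt (fun σ => X σ p)
              ((c / Real.sqrt (m ^ 2 * c ^ 2 + dot3 (P τ p) (P τ p))) • P τ p) τ) →
          (∀ τ p, HasDerivAt (fun σ => P σ p)
              (-(E τ (X τ p)) -
                crossProduct
                  ((Real.sqrt (m ^ 2 * c ^ 2 + dot3 (P τ p) (P τ p)))⁻¹ • P τ p)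
                  (B τ (X τ p))) τ) →
          ∀ τ, |τ - t| ≤ Tbar → ∀ (p : Fin 3 → ℝ) (i j : Fin 3),
            |fderiv ℝ (fun q => X τ q j) p (Pi.single i 1)|
              ≤ C * c * |t - τ| / Real.sqrt (m ^ 2 * c ^ 2 + dot3 p p) := by
  have hmc : 0 < m * c := mul_pos hm hc
  set Tbar := m * c / (18 * K) with hTbar
  set L := 4 / m + 9 * K + 8 * K / (m * c) with hLdef
  have hL0 : 0 ≤ L := by positivity
  set C := 8 * Real.exp (L * Tbar) with hCdef
  have hTpos : 0 < Tbar := by positivity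
  have hCpos : 0 < C := by positivity
  refine ⟨Tbar, C, hTpos, hCpos, ?_⟩
  intro E B hEcd hBcd hEb hBb hEg hBg t ht x X P hXcd hPcd hX0 hP0 hVel hFor τ hτ p i j
  have hK0 : (0:ℝ) ≤ K := hK.le
  have hEnorm : ∀ s y, ‖E s y‖ ≤ K := fun s y =>
    pi_norm_le_iff_of_nonneg hK0 |>.2 fun k => by rw [Real.norm_eq_abs]; exact hEb s y k
  have hBnorm : ∀ s y, ‖B s y‖ ≤ K := fun s y =>
    pi_norm_le_iff_of_nonneg hK0 |>.2 fun k => by rw [Real.norm_eq_abs]; exact hBb s y k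
  set e : E3 := Pi.single i 1 with he
  have henorm : ‖e‖ = 1 := by rw [he, Pi.norm_single, Real.norm_eq_abs]; norm_num
  -- restated ODEs using nu3
  have hVel' : ∀ σ q, HasDerivAt (fun σ' => X σ' q) ((c / nu3 m c (P σ q)) • P σ q) σ :=
    hVel
  have hFor' : ∀ σ q, HasDerivAt (fun σ' => P σ' q)
      (-(E σ (X σ q)) - crossProduct ((nu3 m c (P σ q))⁻¹ • P σ q) (B σ (X σ q))) σ :=
    hFor
  set Y : ℝ → E3 := fun σ => fderiv ℝ (fun q => X σ q) p e with hYdef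
  set Q : ℝ → E3 := fun σ => fderiv ℝ (fun q => P σ q) p e with hQdef
  have hY' : ∀ σ, HasDerivAt Y
      (fderiv ℝ (fun q => (c / nu3 m c (P σ q)) • P σ q) p e) σ :=
    fun σ => hasDerivAt_fderiv_swap hXcd hVel' p e σ
  have hQ' : ∀ σ, HasDerivAt Q
      (fderiv ℝ (fun q =>
        -(E σ (X σ q)) - crossProduct ((nu3 m c (P σ q))⁻¹ • P σ q) (B σ (X σ q))) p e) σ :=
    fun σ => hasDerivAt_fderiv_swap hPcd hFor' p e σ
  have hXc1 : ContDiff ℝ 1 (fun z : ℝ × E3 => X z.1 z.2) := hXcd.of_le (by norm_num)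
  have hPc1 : ContDiff ℝ 1 (fun z : ℝ × E3 => P z.1 z.2) := hPcd.of_le (by norm_num)
  have hXsl : ∀ σ (q : E3), DifferentiableAt ℝ (fun q' => X σ q') q := slice_diff hXc1
  have hPsl : ∀ σ (q : E3), DifferentiableAt ℝ (fun q' => P σ q') q := slice_diff hPc1
  have hEsl : ∀ σ (y : E3), DifferentiableAt ℝ (fun y' => E σ y') y := slice_diff hEcd
  have hBsl : ∀ σ (y : E3), DifferentiableAt ℝ (fun y' => B σ y') y := slice_diff hBcd
  -- value of Y'
  have hYval : ∀ σ, fderiv ℝ (fun q => (c / nu3 m c (P σ q)) • P σ q) p e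
      = WCLM m c c (P σ p) (Q σ) := by
    intro σ
    have h1 : HasFDerivAt (fun q => (c / nu3 m c (P σ q)) • P σ q)
        ((WCLM m c c (P σ p)).comp (fderiv ℝ (fun q => P σ q) p)) p :=
      (hasFDerivAt_Wmap m c c hm hc (P σ p)).comp p (hPsl σ p).hasFDerivAt
    rw [h1.fderiv]
    rfl
  -- value of Q'
  have hQval : ∀ σ, fderiv ℝ (fun q =>
        -(E σ (X σ q)) - crossProduct ((nu3 m c (P σ q))⁻¹ • P σ q) (B σ (X σ q))) p e
      = -(fderiv ℝ (fun y => E σ y) (X σ p) (Y σ))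
        - (crossCLM ((nu3 m c (P σ p))⁻¹ • P σ p)
              (fderiv ℝ (fun y => B σ y) (X σ p) (Y σ))
           + crossCLM (WCLM m c 1 (P σ p) (Q σ)) (B σ (X σ p))) := by
    intro σ
    have hXp : HasFDerivAt (fun q => X σ q) (fderiv ℝ (fun q => X σ q) p) p :=
      (hXsl σ p).hasFDerivAt
    have hPp : HasFDerivAt (fun q => P σ q) (fderiv ℝ (fun q => P σ q) p) p :=
      (hPsl σ p).hasFDerivAt
    have hEcomp : HasFDerivAt (fun q => E σ (X σ q))
        ((fderiv ℝ (fun y => E σ y) (X σ p)).comp (fderiv ℝ (fun q => X σ q) p)) p :=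
      (hEsl σ (X σ p)).hasFDerivAt.comp p hXp
    have hBcomp : HasFDerivAt (fun q => B σ (X σ q))
        ((fderiv ℝ (fun y => B σ y) (X σ p)).comp (fderiv ℝ (fun q => X σ q) p)) p :=
      (hBsl σ (X σ p)).hasFDerivAt.comp p hXp
    have hW2 : HasFDerivAt (fun q => (nu3 m c (P σ q))⁻¹ • P σ q)
        ((WCLM m c 1 (P σ p)).comp (fderiv ℝ (fun q => P σ q) p)) p := by
      have hfun : (fun q => (nu3 m c (P σ q))⁻¹ • P σ q)
          = fun q => ((1 : ℝ) / nu3 m c (P σ q)) • P σ q := by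
        funext q; rw [one_div]
      rw [hfun]
      exact (hasFDerivAt_Wmap m c 1 hm hc (P σ p)).comp p hPp
    have hcl : HasFDerivAt (fun q => crossCLM ((nu3 m c (P σ q))⁻¹ • P σ q))
        (crossCLM.comp ((WCLM m c 1 (P σ p)).comp (fderiv ℝ (fun q => P σ q) p))) p :=
      crossCLM.hasFDerivAt.comp p hW2
    have hcross := hcl.clm_apply hBcomp
    have htot := hEcomp.fun_neg.fun_sub hcross
    have hfun2 : (fun q =>
        -(E σ (X σ q)) - crossProduct ((nu3 m c (P σ q))⁻¹ • P σ q) (B σ (X σ q)))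
        = fun q => -(E σ (X σ q)) - crossCLM ((nu3 m c (P σ q))⁻¹ • P σ q) (B σ (X σ q)) := rfl
    rw [hfun2, htot.fderiv]
    simp only [ContinuousLinearMap.coe_sub', ContinuousLinearMap.coe_comp',
      ContinuousLinearMap.neg_apply, ContinuousLinearMap.add_apply, Pi.sub_apply,
      Function.comp_apply, ContinuousLinearMap.comp_apply, ContinuousLinearMap.flip_apply]
    rfl
  -- bounds on the derivatives
  have hνP : ∀ σ, m * c ≤ nu3 m c (P σ p) := fun σ => mc_le_nu3 m c (P σ p) hm hc
  have hYbd : ∀ σ, ‖fderiv ℝ (fun q => (c / nu3 m c (P σ q)) • P σ q) p e‖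
      ≤ 4 / m * ‖Q σ‖ := by
    intro σ
    rw [hYval σ]
    refine (WCLM_bound m c c hm hc (P σ p) (Q σ)).trans ?_
    apply mul_le_mul_of_nonneg_right ?_ (norm_nonneg _)
    rw [abs_of_pos hc]
    rw [div_le_div_iff₀ (nu3_pos m c (P σ p) hm hc) hm]
    have := hνP σ
    nlinarith
  have hDEbd : ∀ σ (w : E3), ‖fderiv ℝ (fun y => E σ y) (X σ p) w‖ ≤ 3 * K * ‖w‖ := by
    intro σ w
    apply matrix_bound _ ?_ hK0
    intro j' k
    rw [← fderiv_component (hEsl σ (X σ p)) j' (Pi.single k 1)]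
    exact hEg σ (X σ p) j' k
  have hDBbd : ∀ σ (w : E3), ‖fderiv ℝ (fun y => B σ y) (X σ p) w‖ ≤ 3 * K * ‖w‖ := by
    intro σ w
    apply matrix_bound _ ?_ hK0
    intro j' k
    rw [← fderiv_component (hBsl σ (X σ p)) j' (Pi.single k 1)]
    exact hBg σ (X σ p) j' k
  have hQbd : ∀ σ, ‖fderiv ℝ (fun q =>
        -(E σ (X σ q)) - crossProduct ((nu3 m c (P σ q))⁻¹ • P σ q) (B σ (X σ q))) p e‖
      ≤ 9 * K * ‖Y σ‖ + 8 * K / (m * c) * ‖Q σ‖ := by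
    intro σ
    rw [hQval σ]
    refine (norm_sub_le _ _).trans ?_
    have t1 : ‖-(fderiv ℝ (fun y => E σ y) (X σ p) (Y σ))‖ ≤ 3 * K * ‖Y σ‖ := by
      rw [norm_neg]; exact hDEbd σ (Y σ)
    have t2 : ‖crossCLM ((nu3 m c (P σ p))⁻¹ • P σ p)
        (fderiv ℝ (fun y => B σ y) (X σ p) (Y σ))‖ ≤ 6 * K * ‖Y σ‖ := by
      rw [crossCLM_apply]
      refine (cross_norm_le _ _).trans ?_
      calc 2 * ‖(nu3 m c (P σ p))⁻¹ • P σ p‖ * ‖fderiv ℝ (fun y => B σ y) (X σ p) (Y σ)‖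
          ≤ 2 * 1 * (3 * K * ‖Y σ‖) := by
            apply mul_le_mul
            · exact mul_le_mul_of_nonneg_left (W2_norm_le m c hm hc (P σ p)) (by norm_num)
            · exact hDBbd σ (Y σ)
            · exact norm_nonneg _
            · norm_num
        _ = 6 * K * ‖Y σ‖ := by ring
    have t3 : ‖crossCLM (WCLM m c 1 (P σ p) (Q σ)) (B σ (X σ p))‖
        ≤ 8 * K / (m * c) * ‖Q σ‖ := by
      rw [crossCLM_apply]
      refine (cross_norm_le _ _).trans ?_
      have b1 : ‖WCLM m c 1 (P σ p) (Q σ)‖ ≤ 4 / (m * c) * ‖Q σ‖ := by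
        refine (WCLM_bound m c 1 hm hc (P σ p) (Q σ)).trans ?_
        apply mul_le_mul_of_nonneg_right ?_ (norm_nonneg _)
        rw [abs_one, mul_one]
        apply div_le_div_of_nonneg_left (by norm_num) hmc (hνP σ)
      calc 2 * ‖WCLM m c 1 (P σ p) (Q σ)‖ * ‖B σ (X σ p)‖
          ≤ 2 * (4 / (m * c) * ‖Q σ‖) * K := by
            apply mul_le_mul
            · exact mul_le_mul_of_nonneg_left b1 (by norm_num)
            · exact hBnorm σ (X σ p)
            · exact norm_nonneg _
            · positivity
        _ = 8 * K / (m * c) * ‖Q σ‖ := by ring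
    calc _ ≤ 3 * K * ‖Y σ‖ + (6 * K * ‖Y σ‖ + 8 * K / (m * c) * ‖Q σ‖) :=
          add_le_add t1 ((norm_add_le _ _).trans (add_le_add t2 t3))
      _ = 9 * K * ‖Y σ‖ + 8 * K / (m * c) * ‖Q σ‖ := by ring
  -- Gronwall for (Y, Q)
  set f : ℝ → E3 × E3 := fun σ => (Y σ, Q σ) with hfdef
  have hfd : ∀ σ, HasDerivAt f
      ((fderiv ℝ (fun q => (c / nu3 m c (P σ q)) • P σ q) p e,
        fderiv ℝ (fun q =>
          -(E σ (X σ q)) - crossProduct ((nu3 m c (P σ q))⁻¹ • P σ q) (B σ (X σ q))) p e)) σ :=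
    fun σ => (hY' σ).prodMk (hQ' σ)
  have hfbound : ∀ σ, ‖(fderiv ℝ (fun q => (c / nu3 m c (P σ q)) • P σ q) p e,
        fderiv ℝ (fun q =>
          -(E σ (X σ q)) - crossProduct ((nu3 m c (P σ q))⁻¹ • P σ q) (B σ (X σ q))) p e)‖
      ≤ L * ‖f σ‖ := by
    intro σ
    have hYf : ‖Y σ‖ ≤ ‖f σ‖ := norm_fst_le (f σ)
    have hQf : ‖Q σ‖ ≤ ‖f σ‖ := norm_snd_le (f σ)
    have hf0 : 0 ≤ ‖f σ‖ := norm_nonneg _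
    rw [Prod.norm_def]
    apply max_le
    · refine (hYbd σ).trans ?_
      rw [hLdef]
      have h1 : 4 / m * ‖Q σ‖ ≤ 4 / m * ‖f σ‖ :=
        mul_le_mul_of_nonneg_left hQf (by positivity)
      have h2 : 0 ≤ (9 * K + 8 * K / (m * c)) * ‖f σ‖ := by positivity
      calc 4 / m * ‖Q σ‖ ≤ 4 / m * ‖f σ‖ := h1
        _ ≤ (4 / m + 9 * K + 8 * K / (m * c)) * ‖f σ‖ := by nlinarith
    · refine (hQbd σ).trans ?_
      rw [hLdef]
      have h1 : 9 * K * ‖Y σ‖ ≤ 9 * K * ‖f σ‖ :=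
        mul_le_mul_of_nonneg_left hYf (by positivity)
      have h2 : 8 * K / (m * c) * ‖Q σ‖ ≤ 8 * K / (m * c) * ‖f σ‖ :=
        mul_le_mul_of_nonneg_left hQf (by positivity)
      have h3 : 0 ≤ 4 / m * ‖f σ‖ := by positivity
      calc 9 * K * ‖Y σ‖ + 8 * K / (m * c) * ‖Q σ‖
          ≤ 9 * K * ‖f σ‖ + 8 * K / (m * c) * ‖f σ‖ := add_le_add h1 h2
        _ ≤ (4 / m + 9 * K + 8 * K / (m * c)) * ‖f σ‖ := by nlinarith
  -- initial value
  have hYt : Y t = 0 := by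
    have hfun : (fun q : E3 => X t q) = fun _ : E3 => x := funext hX0
    rw [hYdef]
    simp only [hfun]
    simp
  have hQt : Q t = e := by
    have hfun : (fun q : E3 => P t q) = fun q : E3 => q := funext hP0
    rw [hQdef]
    simp only [hfun]
    rw [fderiv_id']
    simp
  have hft : ‖f t‖ = 1 := by
    rw [hfdef]
    simp only
    rw [Prod.norm_def, hYt, hQt, norm_zero, henorm]
    norm_num
  have hgron : ∀ σ, ‖f σ‖ ≤ Real.exp (L * |σ - t|) := by
    intro σ
    have := gronwall_two_sided hfd hL0 hfbound t σ
    rwa [hft, one_mul] at this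
  have hQgron : ∀ σ, |σ - t| ≤ Tbar → ‖Q σ‖ ≤ Real.exp (L * Tbar) := by
    intro σ hσ
    refine (norm_snd_le (f σ)).trans ((hgron σ).trans ?_)
    exact Real.exp_le_exp.2 (mul_le_mul_of_nonneg_left hσ hL0)
  -- momentum moves slowly
  have hforce : ∀ σ, ‖-(E σ (X σ p)) - crossProduct ((nu3 m c (P σ p))⁻¹ • P σ p)
      (B σ (X σ p))‖ ≤ 3 * K := by
    intro σ
    refine (norm_sub_le _ _).trans ?_
    have t1 : ‖-(E σ (X σ p))‖ ≤ K := by rw [norm_neg]; exact hEnorm σ (X σ p)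
    have t2 : ‖crossProduct ((nu3 m c (P σ p))⁻¹ • P σ p) (B σ (X σ p))‖ ≤ 2 * K := by
      refine (cross_norm_le _ _).trans ?_
      calc 2 * ‖(nu3 m c (P σ p))⁻¹ • P σ p‖ * ‖B σ (X σ p)‖ ≤ 2 * 1 * K := by
            apply mul_le_mul
            · exact mul_le_mul_of_nonneg_left (W2_norm_le m c hm hc (P σ p)) (by norm_num)
            · exact hBnorm σ (X σ p)
            · exact norm_nonneg _
            · norm_num
        _ = 2 * K := by ring
    linarith
  have hPmove : ∀ σ, ‖P σ p - p‖ ≤ 3 * K * |σ - t| := by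
    intro σ
    have := Convex.norm_image_sub_le_of_norm_hasDerivWithin_le
      (f := fun σ' => P σ' p)
      (f' := fun σ' => -(E σ' (X σ' p)) - crossProduct ((nu3 m c (P σ' p))⁻¹ • P σ' p)
        (B σ' (X σ' p)))
      (C := 3 * K) (s := Set.univ)
      (fun σ' _ => (hFor' σ' p).hasDerivWithinAt)
      (fun σ' _ => hforce σ') convex_univ (Set.mem_univ t) (Set.mem_univ σ)
    have h2 : ‖P σ p - P t p‖ ≤ 3 * K * ‖σ - t‖ := this
    rw [hP0 p] at h2
    simpa [Real.norm_eq_abs] using h2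
  -- lower bound for nu3 (P σ p) on the interval
  have hνlow : ∀ σ, |σ - t| ≤ Tbar → nu3 m c p / 2 ≤ nu3 m c (P σ p) := by
    intro σ hσ
    have h1 := nu3_lipschitz m c hm hc (P σ p) p
    have h2 := hPmove σ
    have h3 : 3 * ‖P σ p - p‖ ≤ 9 * K * Tbar := by
      have : ‖P σ p - p‖ ≤ 3 * K * Tbar :=
        h2.trans (mul_le_mul_of_nonneg_left hσ (by positivity))
      linarith
    have h4 : 9 * K * Tbar = m * c / 2 := by
      rw [hTbar]; field_simp; ring
    have h5 : m * c ≤ nu3 m c p := mc_le_nu3 m c p hm hc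
    have h6 : |nu3 m c (P σ p) - nu3 m c p| ≤ m * c / 2 := by
      rw [← h4]; exact h1.trans h3
    have h7 := abs_le.1 h6
    linarith [h7.1]
  -- final mean value estimate for Y on uIcc t τ
  have hνp : 0 < nu3 m c p := nu3_pos m c p hm hc
  set M : ℝ := 8 * c * Real.exp (L * Tbar) / nu3 m c p with hMdef
  have hYfinal : ‖Y τ - Y t‖ ≤ M * |τ - t| := by
    have hbd : ∀ σ ∈ Set.uIcc t τ,
        ‖fderiv ℝ (fun q => (c / nu3 m c (P σ q)) • P σ q) p e‖ ≤ M := by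
      intro σ hσ
      have hσT : |σ - t| ≤ Tbar := (uIcc_abs_le hσ).trans hτ
      rw [hYval σ]
      refine (WCLM_bound m c c hm hc (P σ p) (Q σ)).trans ?_
      have hQb := hQgron σ hσT
      have hν2 := hνlow σ hσT
      have hνσ := nu3_pos m c (P σ p) hm hc
      rw [abs_of_pos hc]
      calc 4 * c / nu3 m c (P σ p) * ‖Q σ‖
          ≤ 4 * c / (nu3 m c p / 2) * Real.exp (L * Tbar) := by
            apply mul_le_mul ?_ hQb (norm_nonneg _) (by positivity)
            apply div_le_div_of_nonneg_left (by positivity) (by positivity) hν2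
        _ = M := by rw [hMdef]; field_simp; ring
    have := Convex.norm_image_sub_le_of_norm_hasDerivWithin_le
      (f := Y)
      (f' := fun σ => fderiv ℝ (fun q => (c / nu3 m c (P σ q)) • P σ q) p e)
      (C := M) (s := Set.uIcc t τ)
      (fun σ _ => (hY' σ).hasDerivWithinAt)
      hbd (convex_uIcc t τ) Set.left_mem_uIcc Set.right_mem_uIcc
    simpa [Real.norm_eq_abs] using this
  have hYnorm : ‖Y τ‖ ≤ M * |τ - t| := by
    rw [← sub_zero (Y τ), ← hYt]
    exact hYfinal
  -- conclude componentwise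
  have hcomp : fderiv ℝ (fun q => X τ q j) p (Pi.single i 1) = Y τ j := by
    have := fderiv_component (f := fun q => X τ q) (hXsl τ p) j e
    rw [hYdef]
    simpa [he] using this
  rw [hcomp]
  have habs : |Y τ j| ≤ ‖Y τ‖ := by
    rw [← Real.norm_eq_abs]; exact norm_le_pi_norm (Y τ) j
  refine (habs.trans hYnorm).trans (le_of_eq ?_)
  show M * |τ - t| = C * c * |t - τ| / nu3 m c p
  rw [abs_sub_comm τ t, hMdef, hCdef]
  ring
end
end
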